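/- Let P(z) = Σ_{j=0}^{s} (-1)^j γ_j (z^j − z^{N+s+1−j}) with γ_0 = 1, real γ_j, and 0 ≤ s ≤ N. If Σ_{j=1}^{s} |γ_j| ≤ 1, then every complex zero of P lies on the unit circle. -/

import Mathlib

open Finset Polynomial

lemma sin_odd (l : ℕ) : Real.sin ((2 * (l:ℝ) + 1) * Real.pi / 2) = (-1) ^ l := by
  induction l with
  | zero => norm_num
  | succ n ih =>
    have h : (2 * ((n:ℝ)+1) + 1) * Real.pi / 2 = (2*(n:ℝ)+1) * Real.pi / 2 + Real.pi := by ring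
    push_cast
    rw [h, Real.sin_add_pi, ih]
    ring

lemma lemA (K s : ℕ) (hK : s < K) (c : ℕ → ℝ) (hc0 : c 0 = 1)
    (hsum : ∑ j ∈ Finset.Icc 1 s, |c j| < 1) :
    ∃ p : Polynomial ℂ,
      (∀ z : ℂ, p.eval z
          = ∑ j ∈ Finset.range (s+1), (-1)^j * (c j : ℂ) * (z^j - z^(K - j)))
      ∧ p.leadingCoeff = -1 ∧ Multiset.card p.roots = K ∧ ∀ w ∈ p.roots, ‖w‖ = 1 := by
  classical
  set p : Polynomial ℂ := ∑ j ∈ Finset.range (s+1),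
      Polynomial.C ((-1 : ℂ)^j * (c j : ℂ)) * (Polynomial.X^j - Polynomial.X^(K - j)) with hp
  have heval : ∀ z : ℂ, p.eval z
      = ∑ j ∈ Finset.range (s+1), (-1)^j * (c j : ℂ) * (z^j - z^(K-j)) := by
    intro z
    simp [hp, eval_finset_sum]
  have hcoeff : ∀ n, p.coeff n = ∑ j ∈ Finset.range (s+1),
      ((-1:ℂ)^j * (c j : ℂ)) * ((if j = n then 1 else 0) - (if K - j = n then 1 else 0)) := by
    intro n
    rw [hp, Polynomial.finset_sum_coeff]
    refine Finset.sum_congr rfl fun j _ => ?_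
    rw [Polynomial.coeff_C_mul, Polynomial.coeff_sub, Polynomial.coeff_X_pow,
      Polynomial.coeff_X_pow]
    simp [eq_comm]
  have hcK : p.coeff K = -1 := by
    rw [hcoeff, Finset.sum_eq_single 0]
    · have h1 : (0:ℕ) ≠ K := by omega
      simp [h1, hc0]
    · intro j hj hj0
      have hjs : j ≤ s := Finset.mem_range_succ_iff.mp hj
      have h1 : j ≠ K := by omega
      have h2 : K - j ≠ K := by omega
      simp [h1, h2]
    · intro hne
      exact absurd (Finset.mem_range.mpr (by omega)) hne
  have hdle : p.natDegree ≤ K := Polynomial.natDegree_le_iff_coeff_eq_zero.mpr (by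
    intro n hn; rw [hcoeff]
    apply Finset.sum_eq_zero; intro j hj
    have hjs : j ≤ s := Finset.mem_range_succ_iff.mp hj
    have h1 : j ≠ n := by omega
    have h2 : K - j ≠ n := by omega
    simp [h1, h2])
  have hdK : p.natDegree = K :=
    le_antisymm hdle (Polynomial.le_natDegree_of_ne_zero (by rw [hcK]; norm_num))
  have hlc : p.leadingCoeff = -1 := by rw [Polynomial.leadingCoeff, hdK, hcK]
  have hp0 : p ≠ 0 := by
    intro h
    rw [h] at hlc
    simp at hlc
  have hKpos : 0 < K := lt_of_le_of_lt (Nat.zero_le s) hK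
  set g : ℝ → ℝ := fun θ => ∑ j ∈ Finset.range (s+1),
      (-1:ℝ)^j * c j * Real.sin (((K:ℝ)/2 - j) * θ) with hg
  have hgcont : Continuous g := by
    rw [hg]
    apply continuous_finset_sum
    intro j _
    fun_prop
  have hkey : ∀ θ : ℝ, g θ = 0 → p.eval (Complex.exp (θ * Complex.I)) = 0 := by
    intro θ hθ
    have hterm : ∀ j ∈ Finset.range (s+1),
        (Complex.exp (θ*Complex.I))^j - (Complex.exp (θ*Complex.I))^(K-j)
          = Complex.exp ((K:ℝ)*θ/2*Complex.I) * (-2*Complex.I)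
            * Complex.sin (((((K:ℝ)/2 - j)*θ : ℝ)) : ℂ) := by
      intro j hj
      have hjK : j ≤ K := le_of_lt (lt_of_le_of_lt (Finset.mem_range_succ_iff.mp hj) hK)
      set x : ℂ := (((((K:ℝ)/2 - j)*θ : ℝ)) : ℂ) with hx
      have h3 : Complex.exp (-x*Complex.I) - Complex.exp (x*Complex.I)
          = -2*Complex.I*Complex.sin x := by
        rw [Complex.exp_mul_I, Complex.exp_mul_I, Complex.cos_neg, Complex.sin_neg]
        ring
      have e1 : (Complex.exp (θ*Complex.I))^j = Complex.exp ((j:ℂ)*(θ*Complex.I)) := by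
        rw [← Complex.exp_nat_mul]
      have e2 : (Complex.exp (θ*Complex.I))^(K-j)
          = Complex.exp (((K-j:ℕ):ℂ)*(θ*Complex.I)) := by
        rw [← Complex.exp_nat_mul]
      have a1 : ((j:ℂ))*(θ*Complex.I) = (K:ℝ)*θ/2*Complex.I + (-x*Complex.I) := by
        rw [hx]; push_cast; ring
      have a2 : (((K-j:ℕ)):ℂ)*(θ*Complex.I) = (K:ℝ)*θ/2*Complex.I + x*Complex.I := by
        rw [hx]; push_cast [Nat.cast_sub hjK]; ring
      rw [e1, e2, a1, a2, Complex.exp_add, Complex.exp_add, ← mul_sub, h3]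
      ring
    rw [heval]
    calc ∑ j ∈ Finset.range (s+1), (-1)^j * ((c j : ℝ) : ℂ)
          * ((Complex.exp (θ*Complex.I))^j - (Complex.exp (θ*Complex.I))^(K-j))
        = Complex.exp ((K:ℝ)*θ/2*Complex.I) * (-2*Complex.I)
          * ∑ j ∈ Finset.range (s+1), (-1)^j * ((c j : ℝ) : ℂ)
            * Complex.sin (((((K:ℝ)/2 - j)*θ : ℝ)) : ℂ) := by
          rw [Finset.mul_sum]
          refine Finset.sum_congr rfl fun j hj => ?_
          rw [hterm j hj]; ring
      _ = Complex.exp ((K:ℝ)*θ/2*Complex.I) * (-2*Complex.I) * ((g θ : ℝ) : ℂ) := by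
          congr 1
          rw [hg]
          push_cast
          rfl
      _ = 0 := by rw [hθ]; simp
  have hpi := Real.pi_pos
  have hKR : (0:ℝ) < K := by exact_mod_cast hKpos
  set θf : ℕ → ℝ := fun l => (2*l+1) * Real.pi / K with hθf
  have hθmono : StrictMono θf := by
    intro a b hab
    rw [hθf]
    apply div_lt_div_of_pos_right _ hKR
    have : (a:ℝ) < b := by exact_mod_cast hab
    nlinarith
  have hθpos : ∀ l, 0 < θf l := by
    intro l
    rw [hθf]
    positivity
  have hθlt : ∀ l, l < K → θf l < 2 * Real.pi := by
    intro l hl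
    rw [hθf, div_lt_iff₀ hKR]
    have : (2*(l:ℝ)+1) < 2*(K:ℝ) := by exact_mod_cast (by omega : 2*l+1 < 2*K)
    nlinarith
  have hsign : ∀ l : ℕ, 0 < (-1:ℝ)^l * g (θf l) := by
    intro l
    have hsplit : Finset.range (s+1) = insert 0 (Finset.Icc 1 s) := by
      ext x; simp [Nat.lt_succ_iff]; omega
    have hmain : Real.sin (((K:ℝ)/2 - (0:ℕ)) * θf l) = (-1)^l := by
      have harg : ((K:ℝ)/2 - (0:ℕ)) * θf l = (2*(l:ℝ)+1) * Real.pi / 2 := by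
        rw [hθf]
        push_cast
        field_simp
        ring
      rw [harg, sin_odd]
    set R := ∑ j ∈ Finset.Icc 1 s, (-1:ℝ)^j * c j * Real.sin (((K:ℝ)/2 - j) * θf l) with hR
    have hgval : g (θf l) = (-1:ℝ)^l + R := by
      rw [hg]
      simp only []
      rw [hsplit, Finset.sum_insert (by simp)]
      rw [hmain]
      simp [hc0, hR]
    have hRb : |R| ≤ ∑ j ∈ Finset.Icc 1 s, |c j| := by
      rw [hR]
      refine (Finset.abs_sum_le_sum_abs _ _).trans (Finset.sum_le_sum fun j _ => ?_)
      rw [abs_mul, abs_mul, abs_pow, abs_neg, abs_one, one_pow, one_mul]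
      exact mul_le_of_le_one_right (abs_nonneg _) (Real.abs_sin_le_one _)
    have hsq : (-1:ℝ)^l * (-1:ℝ)^l = 1 := by
      rw [← mul_pow]; norm_num
    have habs : |(-1:ℝ)^l * R| = |R| := by
      rw [abs_mul, abs_pow, abs_neg, abs_one, one_pow, one_mul]
    rw [hgval, mul_add, hsq]
    have := neg_abs_le ((-1:ℝ)^l * R)
    rw [habs] at this
    linarith
  have hroot : ∀ l, ∃ φ, φ ∈ Set.Ioo (θf l) (θf (l+1)) ∧ g φ = 0 := by
    intro l
    have hle : θf l ≤ θf (l+1) := (hθmono (Nat.lt_succ_self l)).le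
    have h0 := hsign l
    have h1 := hsign (l+1)
    rcases Nat.even_or_odd l with he | ho
    · have e0 : ((-1:ℝ))^l = 1 := he.neg_one_pow
      have e1 : ((-1:ℝ))^(l+1) = -1 := by rw [pow_succ, e0]; ring
      rw [e0, one_mul] at h0
      rw [e1] at h1
      have h1' : g (θf (l+1)) < 0 := by nlinarith
      have hiv := intermediate_value_Ioo' hle hgcont.continuousOn
      have h0mem : (0:ℝ) ∈ Set.Ioo (g (θf (l+1))) (g (θf l)) := ⟨h1', h0⟩
      obtain ⟨φ, hφmem, hφ⟩ := hiv h0mem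
      exact ⟨φ, hφmem, hφ⟩
    · have e0 : ((-1:ℝ))^l = -1 := ho.neg_one_pow
      have e1 : ((-1:ℝ))^(l+1) = 1 := by rw [pow_succ, e0]; ring
      rw [e0] at h0
      rw [e1, one_mul] at h1
      have h0' : g (θf l) < 0 := by nlinarith
      have hiv := intermediate_value_Ioo hle hgcont.continuousOn
      have h0mem : (0:ℝ) ∈ Set.Ioo (g (θf l)) (g (θf (l+1))) := ⟨h0', h1⟩
      obtain ⟨φ, hφmem, hφ⟩ := hiv h0mem
      exact ⟨φ, hφmem, hφ⟩
  choose φf hφmem hφzero using hroot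
  -- total zero function
  set Φ : ℕ → ℝ := fun l => if l = 0 then 0 else φf (l-1) with hΦ
  have hΦ0 : Φ 0 = 0 := by simp [hΦ]
  have hΦzero : ∀ l, g (Φ l) = 0 := by
    intro l
    rcases Nat.eq_zero_or_pos l with rfl | hl
    · rw [hΦ0, hg]
      simp
    · have : l ≠ 0 := by omega
      rw [hΦ]
      simp only [this, if_false]
      exact hφzero (l-1)
  have hΦlow : ∀ l, 0 < l → θf (l-1) < Φ l := by
    intro l hl
    have : l ≠ 0 := by omega
    rw [hΦ]; simp only [this, if_false]
    exact (hφmem (l-1)).1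
  have hΦhigh : ∀ l, 0 < l → Φ l < θf l := by
    intro l hl
    have hne : l ≠ 0 := by omega
    rw [hΦ]; simp only [hne, if_false]
    have := (hφmem (l-1)).2
    rwa [show l - 1 + 1 = l by omega] at this
  have hΦmono : ∀ a b, a < b → Φ a < Φ b := by
    intro a b hab
    rcases Nat.eq_zero_or_pos a with rfl | ha
    · rw [hΦ0]
      exact lt_trans (hθpos (b-1)) (hΦlow b (by omega))
    · calc Φ a < θf a := hΦhigh a ha
        _ ≤ θf (b-1) := by
            rcases eq_or_lt_of_le (show a ≤ b - 1 by omega) with h | h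
            · rw [h]
            · exact (hθmono h).le
        _ < Φ b := hΦlow b (by omega)
  have hΦnonneg : ∀ l, 0 ≤ Φ l := by
    intro l
    rcases Nat.eq_zero_or_pos l with rfl | hl
    · rw [hΦ0]
    · exact le_of_lt (lt_trans (hθpos (l-1)) (hΦlow l hl))
  have hΦlt : ∀ l, l < K → Φ l < 2 * Real.pi := by
    intro l hl
    rcases Nat.eq_zero_or_pos l with rfl | hlp
    · rw [hΦ0]; positivity
    · exact lt_trans (hΦhigh l hlp) (hθlt l hl)
  -- the finset of roots
  set T : Finset ℂ := (Finset.range K).image (fun l => Complex.exp ((Φ l : ℝ) * Complex.I))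
    with hT
  have hinj : Set.InjOn (fun l => Complex.exp ((Φ l : ℝ) * Complex.I)) (Finset.range K) := by
    intro a ha b hb hab
    simp only [Finset.coe_range, Set.mem_Iio] at ha hb
    by_contra hne
    -- wlog a < b
    wlog h : a < b generalizing a b
    · exact this hab.symm hb ha (Ne.symm hne) (by omega)
    have hlt : Φ a < Φ b := hΦmono a b h
    have hab' : Complex.exp ((Φ a : ℝ) * Complex.I) = Complex.exp ((Φ b : ℝ) * Complex.I) := hab
    have hexp : Complex.exp ((Φ b - Φ a : ℝ) * Complex.I) = 1 := by
      rw [Complex.ofReal_sub, sub_mul, Complex.exp_sub, ← hab']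
      exact div_self (Complex.exp_ne_zero _)
    obtain ⟨n, hn⟩ := Complex.exp_eq_one_iff.mp hexp
    have hnr : Φ b - Φ a = (n:ℝ) * (2 * Real.pi) := by
      have h' := congrArg Complex.im hn
      simpa using h'
    have h1 : 0 < Φ b - Φ a := by linarith
    have h2 : Φ b - Φ a < 2 * Real.pi := by
      have := hΦlt b hb
      have := hΦnonneg a
      linarith
    have hn0 : 0 < (n:ℝ) := by
      by_contra hc
      push_neg at hc
      nlinarith
    have hn1 : 1 ≤ (n:ℝ) := by exact_mod_cast (by exact_mod_cast hn0 : (0:ℤ) < n)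
    nlinarith
  have hTcard : T.card = K := by
    rw [hT, Finset.card_image_of_injOn hinj, Finset.card_range]
  have hTroot : ∀ w ∈ T, p.IsRoot w := by
    intro w hw
    rw [hT, Finset.mem_image] at hw
    obtain ⟨l, _, rfl⟩ := hw
    exact hkey (Φ l) (hΦzero l)
  have hTnorm : ∀ w ∈ T, ‖w‖ = 1 := by
    intro w hw
    rw [hT, Finset.mem_image] at hw
    obtain ⟨l, _, rfl⟩ := hw
    exact Complex.norm_exp_ofReal_mul_I (Φ l)
  have hle : T.val ≤ p.roots := by
    rw [Multiset.le_iff_count]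
    intro a
    by_cases ha : a ∈ T
    · have h1 : T.val.count a = 1 := Multiset.count_eq_one_of_mem T.nodup ha
      rw [h1]
      rw [Polynomial.count_roots]
      exact (Polynomial.rootMultiplicity_pos hp0).mpr (hTroot a ha)
    · have h1 : T.val.count a = 0 := by
        rw [Multiset.count_eq_zero]
        exact ha
      rw [h1]
      exact Nat.zero_le _
  have hcard2 : Multiset.card p.roots ≤ Multiset.card T.val := by
    have := Polynomial.card_roots' p
    rw [hdK] at this
    rw [show Multiset.card T.val = K from hTcard]
    exact this
  have heq : T.val = p.roots := Multiset.eq_of_le_of_card_le hle hcard2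
  refine ⟨p, heval, hlc, ?_, ?_⟩
  · rw [← heq]
    exact hTcard
  · intro w hw
    rw [← heq] at hw
    exact hTnorm w hw

lemma prod_lower (M : Multiset ℝ) (b : ℝ) (hb : 0 ≤ b) (h : ∀ x ∈ M, b ≤ x) :
    b ^ Multiset.card M ≤ M.prod := by
  induction M using Multiset.induction with
  | empty => simp
  | cons a M ih =>
    rw [Multiset.prod_cons, Multiset.card_cons, pow_succ, mul_comm]
    have hba : b ≤ a := h a (Multiset.mem_cons_self a M)
    have hM : ∀ x ∈ M, b ≤ x := fun x hx => h x (Multiset.mem_cons_of_mem hx)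
    have := ih hM
    have hbM : 0 ≤ b ^ Multiset.card M := pow_nonneg hb _
    nlinarith

lemma lemB0 (N s : ℕ) (hs : s ≤ N) (γ : ℕ → ℝ) (hγ0 : γ 0 = 1)
    (h : ∑ j ∈ Finset.Icc 1 s, |γ j| ≤ 1) (z : ℂ) (hr : 1 < ‖z‖)
    (hz : ∑ j ∈ Finset.range (s + 1),
        (-1 : ℂ) ^ j * (γ j : ℂ) * (z ^ j - z ^ (N + s + 1 - j)) = 0)
    (t : ℝ) (ht0 : 0 ≤ t) (ht1 : t < 1) :
    (‖z‖ - 1)^(N+s+1) ≤ (1 - t) * (1 + ‖z‖^(N+s+1)) := by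
  classical
  have hr1 : 0 < ‖z‖ - 1 := by linarith
  have hsum' : ∑ j ∈ Finset.Icc 1 s, |(fun j => if j = 0 then 1 else t * γ j) j| < 1 := by
    have heq : ∀ j ∈ Finset.Icc 1 s,
        |(fun j => if j = 0 then 1 else t * γ j) j| = t * |γ j| := by
      intro j hj
      have : j ≠ 0 := by
        rw [Finset.mem_Icc] at hj; omega
      simp only [this, if_false]
      rw [abs_mul, abs_of_nonneg ht0]
    rw [Finset.sum_congr rfl heq, ← Finset.mul_sum]
    calc t * ∑ j ∈ Finset.Icc 1 s, |γ j| ≤ t * 1 := mul_le_mul_of_nonneg_left h ht0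
      _ < 1 := by linarith
  obtain ⟨p, heval, hlc, hcard, hnorm⟩ := lemA (N+s+1) s (by omega)
    (fun j => if j = 0 then 1 else t * γ j) (by simp) hsum'
  have hsplit : Finset.range (s+1) = insert 0 (Finset.Icc 1 s) := by
    ext x; simp [Nat.lt_succ_iff]; omega
  have hS : ∑ j ∈ Finset.Icc 1 s, (-1:ℂ)^j * (γ j : ℂ) * (z^j - z^(N+s+1-j))
      = -(1 - z^(N+s+1)) := by
    have h2 := hz
    rw [hsplit, Finset.sum_insert (by simp)] at h2
    simp only [pow_zero, one_mul, Nat.sub_zero, hγ0, Complex.ofReal_one] at h2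
    linear_combination h2
  have hev : p.eval z = ((1 - t : ℝ) : ℂ) * (1 - z^(N+s+1)) := by
    rw [heval z, hsplit, Finset.sum_insert (by simp)]
    have h2 : ∀ j ∈ Finset.Icc 1 s,
        (-1:ℂ)^j * (((if j = 0 then 1 else t * γ j : ℝ)) : ℂ) * (z^j - z^(N+s+1-j))
        = ((t:ℝ):ℂ) * ((-1:ℂ)^j * (γ j : ℂ) * (z^j - z^(N+s+1-j))) := by
      intro j hj
      have hne : j ≠ 0 := by rw [Finset.mem_Icc] at hj; omega
      simp only [hne, if_false]
      push_cast
      ring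
    rw [Finset.sum_congr rfl h2, ← Finset.mul_sum, hS]
    simp only [eq_self_iff_true, if_true, pow_zero, one_mul, Nat.sub_zero,
      Complex.ofReal_one, Complex.ofReal_sub]
    ring
  -- upper bound
  have hub : ‖p.eval z‖ ≤ (1 - t) * (1 + ‖z‖^(N+s+1)) := by
    rw [hev, norm_mul]
    have h1 : ‖((1 - t : ℝ) : ℂ)‖ = 1 - t := by
      rw [Complex.norm_real, Real.norm_eq_abs, abs_of_nonneg (by linarith)]
    have h2 : ‖1 - z^(N+s+1)‖ ≤ 1 + ‖z‖^(N+s+1) := by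
      calc ‖1 - z^(N+s+1)‖ ≤ ‖(1:ℂ)‖ + ‖z^(N+s+1)‖ := norm_sub_le _ _
        _ = 1 + ‖z‖^(N+s+1) := by rw [norm_one, norm_pow]
    rw [h1]
    exact mul_le_mul_of_nonneg_left h2 (by linarith)
  -- lower bound
  have hfac := (IsAlgClosed.splits p).eq_prod_roots
  have hlb : (‖z‖-1)^(N+s+1) ≤ ‖p.eval z‖ := by
    have hev2 : p.eval z = p.leadingCoeff * (Multiset.map (fun a => z - a) p.roots).prod := by
      conv_lhs => rw [hfac]
      rw [Polynomial.eval_mul, Polynomial.eval_C, Polynomial.eval_multiset_prod,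
        Multiset.map_map]
      congr 2
      ext a
      simp
    rw [hev2, norm_mul, hlc]
    have hn1 : ‖(-1:ℂ)‖ = 1 := by simp
    rw [hn1, one_mul]
    have hprod : ‖(Multiset.map (fun a => z - a) p.roots).prod‖
        = (Multiset.map (fun a => ‖z - a‖) p.roots).prod := by
      rw [show ∀ w : ℂ, ‖w‖ = (normHom : ℂ →*₀ ℝ) w from fun _ => rfl]
      rw [map_multiset_prod (normHom : ℂ →*₀ ℝ), Multiset.map_map]
      rfl
    rw [hprod]
    have hcard2 : Multiset.card (Multiset.map (fun a => ‖z - a‖) p.roots) = N+s+1 := by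
      rw [Multiset.card_map, hcard]
    have := prod_lower (Multiset.map (fun a => ‖z - a‖) p.roots) (‖z‖-1) hr1.le (by
      intro x hx
      rw [Multiset.mem_map] at hx
      obtain ⟨a, ha, rfl⟩ := hx
      have hna : ‖a‖ = 1 := hnorm a ha
      calc ‖z‖ - 1 = ‖z‖ - ‖a‖ := by rw [hna]
        _ ≤ ‖z - a‖ := norm_sub_norm_le _ _)
    rwa [hcard2] at this
  linarith

lemma lemB (N s : ℕ) (hs : s ≤ N) (γ : ℕ → ℝ) (hγ0 : γ 0 = 1)
    (h : ∑ j ∈ Finset.Icc 1 s, |γ j| ≤ 1) (z : ℂ) (hr : 1 < ‖z‖)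
    (hz : ∑ j ∈ Finset.range (s + 1),
        (-1 : ℂ) ^ j * (γ j : ℂ) * (z ^ j - z ^ (N + s + 1 - j)) = 0) : False := by
  have hr1 : 0 < ‖z‖ - 1 := by linarith
  have hrK : 0 < (‖z‖ - 1)^(N+s+1) := pow_pos hr1 _
  have hrKK : (‖z‖-1)^(N+s+1) ≤ ‖z‖^(N+s+1) :=
    pow_le_pow_left₀ (by linarith) (by linarith) _
  have hden : 0 < 2*(1 + ‖z‖^(N+s+1)) := by positivity
  have hεpos : 0 < (‖z‖-1)^(N+s+1) / (2*(1 + ‖z‖^(N+s+1))) := by positivity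
  have hεle : (‖z‖-1)^(N+s+1) / (2*(1 + ‖z‖^(N+s+1))) ≤ 1/2 := by
    rw [div_le_iff₀ hden]
    nlinarith
  have key := lemB0 N s hs γ hγ0 h z hr hz
    (1 - (‖z‖-1)^(N+s+1) / (2*(1 + ‖z‖^(N+s+1)))) (by linarith) (by linarith)
  have heq : (1 - (1 - (‖z‖-1)^(N+s+1) / (2*(1 + ‖z‖^(N+s+1))))) * (1 + ‖z‖^(N+s+1))
      = (‖z‖-1)^(N+s+1) / 2 := by
    field_simp
    ring
  rw [heq] at key
  linarith

/-- If `γ₀ = 1` and `∑_{j=1}^s |γ_j| ≤ 1`, then every complex zero of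
`P(z) = ∑_{j=0}^s (-1)^j γ_j (z^j - z^{N+s+1-j})` lies on the unit circle. -/
theorem stmt7 (N s : ℕ) (hs : s ≤ N) (γ : ℕ → ℝ) (hγ0 : γ 0 = 1)
    (h : ∑ j ∈ Finset.Icc 1 s, |γ j| ≤ 1) (z : ℂ)
    (hz : ∑ j ∈ Finset.range (s + 1),
        (-1 : ℂ) ^ j * (γ j : ℂ) * (z ^ j - z ^ (N + s + 1 - j)) = 0) :
    ‖z‖ = 1 := by
  have hz0 : z ≠ 0 := by
    rintro rfl
    rw [Finset.sum_eq_single 0] at hz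
    · simp [hγ0] at hz
    · intro j hj hjne
      have hjs : j ≤ s := Finset.mem_range_succ_iff.mp hj
      have h1 : (0:ℂ)^j = 0 := zero_pow hjne
      have h2 : (0:ℂ)^(N+s+1-j) = 0 := zero_pow (by omega)
      rw [h1, h2]
      ring
    · intro hne
      exact absurd (Finset.mem_range.mpr (by omega)) hne
  rcases lt_trichotomy ‖z‖ 1 with hlt | heq | hgt
  · -- use z⁻¹
    exfalso
    have hw : 1 < ‖z⁻¹‖ := by
      rw [norm_inv]
      rw [one_lt_inv_iff₀]
      constructor
      · exact norm_pos_iff.mpr hz0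
      · exact hlt
    apply lemB N s hs γ hγ0 h z⁻¹ hw
    have hterm : ∀ j ∈ Finset.range (s+1),
        (-1:ℂ)^j * (γ j : ℂ) * ((z⁻¹)^j - (z⁻¹)^(N+s+1-j))
        = (-(z^(N+s+1))⁻¹) * ((-1:ℂ)^j * (γ j : ℂ) * (z^j - z^(N+s+1-j))) := by
      intro j hj
      have hjs : j ≤ s := Finset.mem_range_succ_iff.mp hj
      have hjK : j ≤ N+s+1 := by omega
      have hpow : z^j * z^(N+s+1-j) = z^(N+s+1) := by
        rw [← pow_add]
        congr 1
        omega
      have hzj : z^j ≠ 0 := pow_ne_zero _ hz0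
      have hzKj : z^(N+s+1-j) ≠ 0 := pow_ne_zero _ hz0
      have hzK : z^(N+s+1) ≠ 0 := pow_ne_zero _ hz0
      have key : (z⁻¹)^j - (z⁻¹)^(N+s+1-j) = (-(z^(N+s+1))⁻¹) * (z^j - z^(N+s+1-j)) := by
        rw [inv_pow, inv_pow]
        apply mul_left_cancel₀ hzK
        rw [mul_sub]
        have e1 : z^(N+s+1) * (z^j)⁻¹ = z^(N+s+1-j) := by
          rw [← hpow, mul_comm (z^j), mul_assoc, mul_inv_cancel₀ hzj, mul_one]
        have e2 : z^(N+s+1) * (z^(N+s+1-j))⁻¹ = z^j := by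
          rw [← hpow, mul_assoc, mul_inv_cancel₀ hzKj, mul_one]
        rw [e1, e2, ← mul_assoc, mul_neg, mul_inv_cancel₀ hzK]
        ring
      rw [key]
      ring
    rw [Finset.sum_congr rfl hterm, ← Finset.mul_sum, hz, mul_zero]
  · exact heq
  · exact absurd hz (fun hzz => lemB N s hs γ hγ0 h z hgt hzz)
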